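/- arXiv:2603.20135 — 3 statements merged into one kernel-verified Lean document; each statement's English description precedes it below -/
import Mathlib

section
/- Let (M_n^{(k)})_{n≥k}, for k = 1, 2, ..., be a family of processes such that each (M_n^{(k)}) is a nonnegative supermartingale under a measure P_∞ with M_k^{(k)} ≤ 1 (each starting at time k). Define M_n = max_{1≤k≤n} M_n^{(k)} and τ = inf{n ≥ 1 : M_n ≥ 1/α}. Then the average run length under P_∞ satisfies E_∞[τ] ≥ 1/α. -/
open MeasureTheory ENNReal

section Aux

variable {Ω : Type*} {m : MeasurableSpace Ω} (μ : Measure Ω) [IsProbabilityMeasure μ]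

/-- The SR-type sum process, minus time, is a supermartingale. -/
theorem aux_supermart (F : Filtration ℕ m) (M : ℕ → ℕ → Ω → ℝ)
    (hadapt : ∀ k, Adapted F (M k))
    (hinit : ∀ k, ∀ᵐ ω ∂μ, M k k ω ≤ 1)
    (hint : ∀ k n, Integrable (M k n) μ)
    (hsupermart : ∀ k i j, k ≤ i → i ≤ j → μ[M k j | F i] ≤ᵐ[μ] M k i) :
    Supermartingale (fun n ω => (∑ k ∈ Finset.Icc 1 n, M k n ω) - n) F μ := by
  have hGint : ∀ n, Integrable (fun ω => ∑ k ∈ Finset.Icc 1 n, M k n ω) μ := fun n => by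
    simpa using integrable_finset_sum (Finset.Icc 1 n) (fun k _ => hint k n)
  refine ⟨fun n => (Finset.stronglyMeasurable_fun_sum _ fun k _ => (hadapt k n).stronglyMeasurable).sub
      stronglyMeasurable_const, fun i j hij => ?_, fun n => (hGint n).sub (integrable_const _)⟩
  -- bound each conditional expectation
  have hbd : ∀ k, k ∈ Finset.Icc 1 j →
      μ[M k j | F i] ≤ᵐ[μ] fun ω => if k ≤ i then M k i ω else 1 := by
    intro k hk
    rw [Finset.mem_Icc] at hk
    by_cases hki : k ≤ i
    · simpa [hki] using hsupermart k i j hki hij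
    · push_neg at hki
      have h1 : μ[M k j | F i] =ᵐ[μ] μ[μ[M k j | F k] | F i] :=
        (condExp_condExp_of_le (F.mono hki.le) (F.le k)).symm
      have h2 : μ[μ[M k j | F k] | F i] ≤ᵐ[μ] μ[M k k | F i] :=
        condExp_mono integrable_condExp (hint k k) (hsupermart k k j le_rfl hk.2)
      have h3 : μ[M k k | F i] ≤ᵐ[μ] μ[(fun _ => (1:ℝ)) | F i] :=
        condExp_mono (hint k k) (integrable_const _) (hinit k)
      have h4 : μ[(fun _ => (1:ℝ)) | F i] = fun _ => (1:ℝ) := condExp_const (F.le i) _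
      filter_upwards [h1, h2, h3] with ω e1 e2 e3
      simp only [hki.not_ge, if_false]
      calc (μ[M k j | F i]) ω = (μ[μ[M k j | F k] | F i]) ω := e1
        _ ≤ (μ[M k k | F i]) ω := e2
        _ ≤ (μ[(fun _ => (1:ℝ)) | F i]) ω := e3
        _ = 1 := by rw [h4]
  have hball : ∀ᵐ ω ∂μ, ∀ k, k ∈ Finset.Icc 1 j →
      (μ[M k j | F i]) ω ≤ if k ≤ i then M k i ω else 1 := by
    rw [ae_all_iff]
    intro k
    by_cases hk : k ∈ Finset.Icc 1 j
    · filter_upwards [hbd k hk] with ω h _; exact h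
    · filter_upwards with ω h; exact absurd h hk
  have hsum : μ[fun ω => ∑ k ∈ Finset.Icc 1 j, M k j ω | F i]
      =ᵐ[μ] fun ω => ∑ k ∈ Finset.Icc 1 j, (μ[M k j | F i]) ω := by
    have e : (fun ω => ∑ k ∈ Finset.Icc 1 j, M k j ω) = ∑ k ∈ Finset.Icc 1 j, M k j := by
      funext ω; rw [Finset.sum_apply]
    rw [e]
    have h := condExp_finsetSum (μ := μ) (m := F i) (s := Finset.Icc 1 j)
      (f := fun k => M k j) (fun k _ => hint k j)
    filter_upwards [h] with ω hh
    rw [hh, Finset.sum_apply]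
  have hsub : μ[fun ω => (∑ k ∈ Finset.Icc 1 j, M k j ω) - (j:ℝ) | F i]
      =ᵐ[μ] fun ω => (μ[fun ω => ∑ k ∈ Finset.Icc 1 j, M k j ω | F i]) ω - (j:ℝ) := by
    have h1 := condExp_sub (μ := μ) (m := F i) (hGint j) (integrable_const (j:ℝ))
    have h2 : μ[(fun _ => (j:ℝ)) | F i] = fun _ => (j:ℝ) := condExp_const (F.le i) _
    filter_upwards [h1] with ω h
    have h' : (μ[fun ω => (∑ k ∈ Finset.Icc 1 j, M k j ω) - (j:ℝ) | F i]) ω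
        = (μ[fun ω => ∑ k ∈ Finset.Icc 1 j, M k j ω | F i]) ω
          - (μ[fun _ => (j:ℝ) | F i]) ω := h
    rw [h', h2]
  filter_upwards [hsub, hsum, hball] with ω e1 e2 e3
  have key : ∑ k ∈ Finset.Icc 1 j, (μ[M k j | F i]) ω
      ≤ (∑ k ∈ Finset.Icc 1 i, M k i ω) + ((j : ℝ) - i) := by
    calc ∑ k ∈ Finset.Icc 1 j, (μ[M k j | F i]) ω
        ≤ ∑ k ∈ Finset.Icc 1 j, (if k ≤ i then M k i ω else 1) :=
          Finset.sum_le_sum e3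
      _ = (∑ k ∈ (Finset.Icc 1 j).filter (fun k => k ≤ i), M k i ω)
          + ∑ k ∈ (Finset.Icc 1 j).filter (fun k => ¬ k ≤ i), (1:ℝ) :=
          Finset.sum_ite _ _
      _ = (∑ k ∈ Finset.Icc 1 i, M k i ω) + ((j : ℝ) - i) := by
          have hf1 : (Finset.Icc 1 j).filter (fun k => k ≤ i) = Finset.Icc 1 i := by
            ext k; simp only [Finset.mem_filter, Finset.mem_Icc]; omega
          have hf2 : (Finset.Icc 1 j).filter (fun k => ¬ k ≤ i) = Finset.Ioc i j := by
            ext k; simp only [Finset.mem_filter, Finset.mem_Icc, Finset.mem_Ioc]; omega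
          rw [hf1, hf2, Finset.sum_const, Nat.card_Ioc, nsmul_eq_mul, mul_one,
            Nat.cast_sub hij]
  calc (μ[fun ω => (∑ k ∈ Finset.Icc 1 j, M k j ω) - (j:ℝ) | F i]) ω
      = (μ[fun ω => ∑ k ∈ Finset.Icc 1 j, M k j ω | F i]) ω - (j:ℝ) := e1
    _ = (∑ k ∈ Finset.Icc 1 j, (μ[M k j | F i]) ω) - (j:ℝ) := by rw [e2]
    _ ≤ ((∑ k ∈ Finset.Icc 1 i, M k i ω) + ((j : ℝ) - i)) - (j:ℝ) := by linarith
    _ = (∑ k ∈ Finset.Icc 1 i, M k i ω) - (i:ℝ) := by ring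

end Aux

/-- Average-run-length control for the e-detector: if each process
`(M k n)_{n ≥ k}` is a nonnegative supermartingale (from time `k`) under the
no-change measure, with `M k k ≤ 1` a.s., and `τ` is the first time `n ≥ 1` at which
`max_{1 ≤ k ≤ n} M k n ≥ 1/α`, then `E_∞[τ] ≥ 1/α`. -/
theorem stmt_7 {Ω : Type*} {m : MeasurableSpace Ω} (μ : Measure Ω) [IsProbabilityMeasure μ]
    (F : Filtration ℕ m) (M : ℕ → ℕ → Ω → ℝ)
    (hadapt : ∀ k, Adapted F (M k))
    (hnn : ∀ k n ω, 0 ≤ M k n ω)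
    (hinit : ∀ k, ∀ᵐ ω ∂μ, M k k ω ≤ 1)
    (hint : ∀ k n, Integrable (M k n) μ)
    (hsupermart : ∀ k i j, k ≤ i → i ≤ j → μ[M k j | F i] ≤ᵐ[μ] M k i)
    (α : ℝ) (hα : α ∈ Set.Ioo (0 : ℝ) 1)
    (τ : Ω → ℝ≥0∞)
    (hτ : ∀ ω, τ ω = sInf {t : ℝ≥0∞ |
      ∃ n : ℕ, t = n ∧ 1 ≤ n ∧ ∃ k, 1 ≤ k ∧ k ≤ n ∧ 1 / α ≤ M k n ω}) :
    1 / ENNReal.ofReal α ≤ ∫⁻ ω, τ ω ∂μ := by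
  obtain ⟨hα0, hα1⟩ := hα
  set β : ℝ := 1 / α with hβdef
  have hβ : 0 < β := by positivity
  set G : ℕ → Ω → ℝ := fun n ω => ∑ k ∈ Finset.Icc 1 n, M k n ω with hGdef
  have hGadapt : Adapted F G := fun n =>
    (Finset.stronglyMeasurable_fun_sum _ fun k _ => (hadapt k n).stronglyMeasurable).measurable
  have hGnn : ∀ n ω, 0 ≤ G n ω := fun n ω =>
    Finset.sum_nonneg fun k _ => hnn k n ω
  have hGint : ∀ n, Integrable (G n) μ := fun n => by
    simpa using integrable_finset_sum (Finset.Icc 1 n) (fun k _ => hint k n)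
  have hf : Supermartingale (fun n ω => G n ω - n) F μ :=
    aux_supermart μ F M hadapt hinit hint hsupermart
  -- cross events
  set A : ℕ → Set Ω := fun n =>
    ⋃ (mm : ℕ) (_ : mm ∈ Finset.Icc 1 n) (k : ℕ) (_ : k ∈ Finset.Icc 1 mm),
      {ω | β ≤ M k mm ω} with hAdef
  have hAmeas : ∀ n, MeasurableSet (A n) := fun n =>
    MeasurableSet.iUnion fun mm => MeasurableSet.iUnion fun _ =>
      MeasurableSet.iUnion fun k => MeasurableSet.iUnion fun _ =>
        measurableSet_le measurable_const ((hadapt k mm).le (F.le mm))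
  have hGcross : ∀ mm k ω, 1 ≤ k → k ≤ mm → β ≤ M k mm ω → β ≤ G mm ω := by
    intro mm k ω h1 h2 h3
    refine h3.trans (Finset.single_le_sum (fun c _ => hnn c mm ω) ?_)
    exact Finset.mem_Icc.mpr ⟨h1, h2⟩
  -- main per-n bound
  have hmain : ∀ n : ℕ, ENNReal.ofReal β * μ (A n) ≤ ∫⁻ ω, τ ω ∂μ := by
    intro n
    set σ : Ω → ℕ := hittingBtwn G (Set.Ici β) 0 n with hσdef
    set σ' : Ω → ℕ∞ := fun ω => (σ ω : ℕ∞) with hσ'def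
    have hσ : IsStoppingTime F σ' := Adapted.isStoppingTime_hittingBtwn hGadapt measurableSet_Ici
    have hσle : ∀ ω, σ ω ≤ n := fun ω => hittingBtwn_le ω
    have hIntG : Integrable (stoppedValue G σ') μ :=
      integrable_stoppedValue ℕ hσ hGint (fun ω => WithTop.coe_le_coe.mpr (hσle ω))
    have hIntσ : Integrable (fun ω => (σ ω : ℝ)) μ :=
      integrable_stoppedValue (u := fun i (_ : Ω) => (i : ℝ)) ℕ hσ
        (fun i => integrable_const _) (fun ω => WithTop.coe_le_coe.mpr (hσle ω))
    -- optional stopping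
    have hOS := hf.neg.expected_stoppedValue_mono (isStoppingTime_const F 0) hσ
      (fun ω => WithTop.coe_le_coe.mpr (Nat.zero_le _)) (fun ω => WithTop.coe_le_coe.mpr (hσle ω))
    have hzero : stoppedValue (-(fun n ω => G n ω - n)) (fun _ : Ω => WithTop.some (0:ℕ)) = fun _ => 0 := by
      funext ω
      show -(G 0 ω - ((0:ℕ):ℝ)) = 0
      have : Finset.Icc 1 0 = (∅ : Finset ℕ) := by decide
      simp [hGdef, this]
    have hneg : stoppedValue (-(fun n ω => G n ω - n)) σ'
        = fun ω => (σ ω : ℝ) - stoppedValue G σ' ω := by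
      funext ω
      show -(G (σ ω) ω - (σ ω : ℝ)) = (σ ω : ℝ) - G (σ ω) ω
      ring
    rw [hzero, hneg, integral_sub hIntσ hIntG] at hOS
    simp only [integral_zero] at hOS
    -- ∫ stoppedValue G σ ≥ β * μ (A n)
    have hlow : ∀ ω, (A n).indicator (fun _ => β) ω ≤ stoppedValue G σ' ω := by
      intro ω
      by_cases hω : ω ∈ A n
      · rw [Set.indicator_of_mem hω]
        simp only [hAdef, Set.mem_iUnion, Finset.mem_Icc] at hω
        obtain ⟨mm, ⟨h1m, hmn⟩, k, ⟨h1k, hkm⟩, hcross⟩ := hω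
        have : stoppedValue G σ' ω ∈ Set.Ici β := by
          refine stoppedValue_hittingBtwn_mem ?_
          exact ⟨mm, ⟨Nat.zero_le _, hmn⟩, hGcross mm k ω h1k hkm hcross⟩
        exact this
      · rw [Set.indicator_of_notMem hω]
        exact hGnn _ ω
    have hindint : Integrable ((A n).indicator (fun _ => β)) μ :=
      (integrable_const β).indicator (hAmeas n)
    have hlow2 : (μ (A n)).toReal * β ≤ ∫ ω, stoppedValue G σ' ω ∂μ := by
      have := integral_mono hindint hIntG hlow
      rwa [integral_indicator_const β (hAmeas n), smul_eq_mul] at this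
    -- σ ≤ τ
    have hστ : ∀ ω, (σ ω : ℝ≥0∞) ≤ τ ω := by
      intro ω
      rw [hτ ω]
      refine le_sInf ?_
      rintro t ⟨mm, rfl, h1m, k, h1k, hkm, hcross⟩
      rw [Nat.cast_le]
      by_cases hmn : mm ≤ n
      · exact hittingBtwn_le_of_mem (Nat.zero_le _) hmn
          (hGcross mm k ω h1k hkm hcross)
      · exact (hσle ω).trans (le_of_not_ge hmn)
    have hup : ENNReal.ofReal (∫ ω, (σ ω : ℝ) ∂μ) ≤ ∫⁻ ω, τ ω ∂μ := by
      rw [ofReal_integral_eq_lintegral_ofReal hIntσ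
        (Filter.Eventually.of_forall fun ω => Nat.cast_nonneg _)]
      refine lintegral_mono fun ω => ?_
      rw [ENNReal.ofReal_natCast]
      exact hστ ω
    calc ENNReal.ofReal β * μ (A n)
        = ENNReal.ofReal (β * (μ (A n)).toReal) := by
          rw [ENNReal.ofReal_mul hβ.le, ENNReal.ofReal_toReal (measure_ne_top μ _)]
      _ ≤ ENNReal.ofReal (∫ ω, (σ ω : ℝ) ∂μ) := by
          apply ENNReal.ofReal_le_ofReal
          calc β * (μ (A n)).toReal = (μ (A n)).toReal * β := mul_comm _ _
            _ ≤ ∫ ω, stoppedValue G σ' ω ∂μ := hlow2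
            _ ≤ ∫ ω, (σ ω : ℝ) ∂μ := by linarith
      _ ≤ ∫⁻ ω, τ ω ∂μ := hup
  -- pass to the limit
  by_cases hT : ∫⁻ ω, τ ω ∂μ = ⊤
  · rw [hT]; exact le_top
  have hAmono : Monotone A := by
    intro a b hab
    simp only [hAdef]
    refine Set.iUnion_mono fun mm => Set.iUnion_subset fun hm => ?_
    rw [Finset.mem_Icc] at hm
    exact Set.subset_iUnion_of_subset (Finset.mem_Icc.mpr ⟨hm.1, hm.2.trans hab⟩)
      subset_rfl
  have hU : ENNReal.ofReal β * μ (⋃ n, A n) ≤ ∫⁻ ω, τ ω ∂μ := by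
    rw [hAmono.measure_iUnion, ENNReal.mul_iSup]
    exact iSup_le hmain
  -- μ (⋃ n, A n) = 1
  have hcompl : μ (⋃ n, A n)ᶜ = 0 := by
    by_contra h
    apply hT
    have hsub : ∀ ω, ((⋃ n, A n)ᶜ).indicator (fun _ => (⊤ : ℝ≥0∞)) ω ≤ τ ω := by
      intro ω
      by_cases hω : ω ∈ (⋃ n, A n)ᶜ
      · rw [Set.indicator_of_mem hω]
        rw [hτ ω]
        have : {t : ℝ≥0∞ | ∃ n : ℕ, t = n ∧ 1 ≤ n ∧
            ∃ k, 1 ≤ k ∧ k ≤ n ∧ 1 / α ≤ M k n ω} = ∅ := by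
          ext t
          simp only [Set.mem_setOf_eq, Set.mem_empty_iff_false, iff_false]
          rintro ⟨n, rfl, h1n, k, h1k, hkn, hcross⟩
          apply hω
          simp only [hAdef, Set.mem_iUnion, Finset.mem_Icc]
          exact ⟨n, n, ⟨h1n, le_rfl⟩, k, ⟨h1k, hkn⟩, hcross⟩
        rw [this, sInf_empty]
      · rw [Set.indicator_of_notMem hω]
        exact zero_le
    have := lintegral_mono (μ := μ) hsub
    rw [lintegral_indicator ((MeasurableSet.iUnion hAmeas).compl)] at this
    rw [setLIntegral_const, ENNReal.top_mul h] at this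
    exact top_le_iff.mp this
  have hone : μ (⋃ n, A n) = 1 := by
    exact (prob_compl_eq_zero_iff (μ := μ) (MeasurableSet.iUnion hAmeas)).mp hcompl
  rw [hone, mul_one] at hU
  refine le_trans (le_of_eq ?_) hU
  rw [hβdef, one_div, one_div, ENNReal.ofReal_inv_of_pos hα0]
end

section
/- Let (Y_i)_{i=1}^n be real numbers with |Y_i| ≤ 1 and suppose (1/n)·Σ_{i=1}^n Y_i ≤ -Δ/2 for some Δ ∈ (0,1]. Define W_n = ∫_{-1}^0 ∏_{i=1}^n (1 + λ·Y_i) dλ. Then (log W_n)/n ≥ Δ²/16 − (2·log n)/n. -/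
set_option maxHeartbeats 1000000

open Real

lemma exp_quad_le {x : ℝ} (h1 : -(1/2) ≤ x) (h2 : x ≤ 1/2) :
    Real.exp (x - x^2) ≤ 1 + x := by
  rcases le_or_gt 0 x with hx | hx
  · have hpos : (0:ℝ) < 1 + x := by linarith
    rw [← Real.exp_log hpos, Real.exp_le_exp]
    have h := Real.log_le_sub_one_of_pos (show (0:ℝ) < (1+x)⁻¹ by positivity)
    rw [Real.log_inv] at h
    have hinv : (1+x)⁻¹ - 1 = -(x/(1+x)) := by field_simp; ring
    rw [hinv] at h
    have : x - x^2 ≤ x / (1+x) := by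
      rw [le_div_iff₀ hpos]; nlinarith
    linarith
  · have hpos : (0:ℝ) < 1 + x := by linarith
    have hy : (0:ℝ) ≤ x^2 - x := by nlinarith
    have hq := Real.quadratic_le_exp_of_nonneg hy
    have hE : (0:ℝ) < Real.exp (x^2 - x) := Real.exp_pos _
    have key : 1 ≤ (1 + x) * Real.exp (x^2 - x) := by nlinarith
    have : Real.exp (x - x^2) = 1 / Real.exp (x^2 - x) := by
      rw [show x - x^2 = -(x^2-x) by ring, Real.exp_neg, one_div]
    rw [this, div_le_iff₀ hE]
    linarith

/-- If `|Y i| ≤ 1` and the average `(1/n)Σ Y_i ≤ -Δ/2` for some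
`Δ ∈ (0,1]`, then the mixture wealth `W_n = ∫_{-1}^0 ∏ (1 + λ Y_i) dλ` satisfies
`(log W_n)/n ≥ Δ²/16 - 2 log n / n`. -/
theorem stmt_9 (n : ℕ) (Y : ℕ → ℝ) (hY : ∀ i, |Y i| ≤ 1)
    (Δ : ℝ) (hΔ : Δ ∈ Set.Ioc (0 : ℝ) 1)
    (havg : (1 / (n : ℝ)) * ∑ i ∈ Finset.Icc 1 n, Y i ≤ -Δ / 2)
    (W : ℝ) (hW : W = ∫ l in (-1 : ℝ)..0, ∏ i ∈ Finset.Icc 1 n, (1 + l * Y i)) :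
    Δ ^ 2 / 16 - 2 * Real.log n / n ≤ Real.log W / n := by
  obtain ⟨hΔ0, hΔ1⟩ := hΔ
  rcases Nat.eq_zero_or_pos n with hn0 | hn0
  · subst hn0
    norm_num at havg
    linarith
  have hnR : (0:ℝ) < n := by exact_mod_cast hn0
  set f : ℝ → ℝ := fun l => ∏ i ∈ Finset.Icc 1 n, (1 + l * Y i) with hfdef
  have hWf : W = ∫ l in (-1:ℝ)..0, f l := hW
  have hfc : Continuous f := by
    apply continuous_finset_prod
    intro i _
    continuity
  have hfint : ∀ a b : ℝ, IntervalIntegrable f MeasureTheory.volume a b :=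
    fun a b => hfc.intervalIntegrable a b
  have hfnn : ∀ l ∈ Set.Icc (-1:ℝ) 0, 0 ≤ f l := by
    intro l hl
    apply Finset.prod_nonneg
    intro i _
    have h := abs_le.1 (hY i)
    nlinarith [hl.1, hl.2, h.1, h.2, mul_nonneg (neg_nonneg.2 hl.2) (sub_nonneg.2 h.2)]
  rcases Nat.lt_or_ge n 2 with hn1 | hn2
  · -- n = 1
    interval_cases n
    · -- n = 1 explicit
      have havg' : Y 1 ≤ -Δ/2 := by
        have : ∑ i ∈ Finset.Icc 1 1, Y i = Y 1 := by simp
        rw [this] at havg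
        norm_num at havg
        linarith
      have hWval : W = 1 - Y 1 / 2 := by
        rw [hW]
        simp only [hfdef, Finset.Icc_self, Finset.prod_singleton]
        have h1 : IntervalIntegrable (fun _ : ℝ => (1:ℝ)) MeasureTheory.volume (-1) 0 :=
          intervalIntegrable_const
        have h2 : IntervalIntegrable (fun l : ℝ => l * Y 1) MeasureTheory.volume (-1) 0 :=
          ((continuous_id.mul continuous_const).intervalIntegrable _ _)
        rw [intervalIntegral.integral_add h1 h2, intervalIntegral.integral_const,
          intervalIntegral.integral_mul_const, integral_id]
        norm_num; ring
      have hW4 : 1 + Δ/4 ≤ W := by rw [hWval]; linarith [havg']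
      have hp : (0:ℝ) < 1 + Δ/4 := by linarith
      have hlb : Real.log (1 + Δ/4) ≤ Real.log W := Real.log_le_log hp hW4
      have h := Real.log_le_sub_one_of_pos (show (0:ℝ) < (1+Δ/4)⁻¹ by positivity)
      rw [Real.log_inv] at h
      have hq : Δ^2/16 ≤ 1 - (1+Δ/4)⁻¹ := by
        have e : 1 - (1+Δ/4)⁻¹ = (Δ/4)/(1+Δ/4) := by field_simp; ring
        rw [e, le_div_iff₀ hp]
        nlinarith
      simp only [Nat.cast_one, Real.log_one, div_one]
      norm_num
      linarith
  · -- n ≥ 2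
    set S : ℝ := ∑ i ∈ Finset.Icc 1 n, Y i with hSdef
    have hcard : (Finset.Icc 1 n).card = n := by
      rw [Nat.card_Icc]; omega
    have hSlb : -(n:ℝ) ≤ S := by
      have : ∑ i ∈ Finset.Icc 1 n, (-1:ℝ) ≤ S :=
        Finset.sum_le_sum fun i _ => (abs_le.1 (hY i)).1
      rwa [Finset.sum_const, hcard, nsmul_eq_mul, mul_neg_one] at this
    have ha : S / n ≤ -Δ/2 := by
      rwa [one_div, inv_mul_eq_div] at havg
    set t : ℝ := -(S/(n:ℝ))/2 with htdef
    have ht1 : Δ/4 ≤ t := by rw [htdef]; linarith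
    have ht2 : t ≤ 1/2 := by
      have h1 : (-1:ℝ) ≤ S / n := by
        rw [le_div_iff₀ hnR]; linarith
      rw [htdef]; linarith
    have ht0 : (0:ℝ) < t := lt_of_lt_of_le (by linarith) ht1
    -- the quadratic lower bound at -t
    have hkey : Real.exp ((n:ℝ) * Δ^2 / 16) ≤ f (-t) := by
      have hSub : S ≤ -Δ/2 * n := by
        rw [div_le_iff₀ hnR] at ha; exact ha
      have step1 : (n:ℝ) * Δ^2 / 16 ≤ -t*S - n*t^2 := by
        have e : -t*S - (n:ℝ)*t^2 = S^2/(4*(n:ℝ)) := by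
          rw [htdef]; field_simp; ring
        rw [e, le_div_iff₀ (by positivity)]
        nlinarith [sq_nonneg (S + Δ/2 * n), mul_nonneg (mul_nonneg hΔ0.le hnR.le) (by linarith : (0:ℝ) ≤ -S - Δ/2*(n:ℝ))]
      have step2 : Real.exp (-t*S - n*t^2) ≤ f (-t) := by
        have eprod : Real.exp (-t*S - n*t^2)
            = ∏ i ∈ Finset.Icc 1 n, Real.exp (-t*Y i - t^2) := by
          rw [← Real.exp_sum]
          congr 1
          rw [Finset.sum_sub_distrib, ← Finset.mul_sum, Finset.sum_const, hcard,
            nsmul_eq_mul, ← hSdef]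
          try ring
        rw [eprod, hfdef]
        apply Finset.prod_le_prod (fun i _ => (Real.exp_pos _).le)
        intro i _
        have hYi := abs_le.1 (hY i)
        have habs : |(-t) * Y i| ≤ 1/2 := by
          rw [abs_mul, abs_neg, abs_of_pos ht0]
          nlinarith [abs_nonneg (Y i), hY i]
        have h := exp_quad_le (abs_le.1 habs).1 (abs_le.1 habs).2
        have hx2 : (-t*Y i)^2 ≤ t^2 := by nlinarith [mul_nonneg (sq_nonneg t) (mul_nonneg (by linarith [hYi.2] : (0:ℝ) ≤ 1 - Y i) (by linarith [hYi.1] : (0:ℝ) ≤ 1 + Y i))]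
        calc Real.exp (-t*Y i - t^2) ≤ Real.exp (-t*Y i - (-t*Y i)^2) := by
              rw [Real.exp_le_exp]; linarith
        _ ≤ 1 + (-t)*Y i := h
      calc Real.exp ((n:ℝ)*Δ^2/16) ≤ Real.exp (-t*S - n*t^2) := by
            rw [Real.exp_le_exp]; exact step1
      _ ≤ f (-t) := step2
    -- B2 : t/(n+1) * exp(nΔ²/16) ≤ W
    have hfm : 0 ≤ f (-t) := hfnn (-t) ⟨by linarith, by linarith⟩
    have hB2 : t/((n:ℝ)+1) * Real.exp ((n:ℝ)*Δ^2/16) ≤ W := by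
      have hsplit : W = (∫ l in (-1:ℝ)..(-t), f l) + ∫ l in (-t:ℝ)..0, f l := by
        rw [hWf]
        exact (intervalIntegral.integral_add_adjacent_intervals (hfint _ _) (hfint _ _)).symm
      have hpart1 : 0 ≤ ∫ l in (-1:ℝ)..(-t), f l :=
        intervalIntegral.integral_nonneg (by linarith)
          (fun u hu => hfnn u ⟨hu.1, by linarith [hu.2]⟩)
      have hlow : ∀ l ∈ Set.Icc (-t) (0:ℝ), ((-t)⁻¹*l)^n * f (-t) ≤ f l := by
        intro l hl
        have hne : (-t) ≠ 0 := by intro h; nlinarith [ht0]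
        have hcform : (-t)⁻¹ * l = (-l)/t := by field_simp
        have hc0 : 0 ≤ (-t)⁻¹ * l := by
          rw [hcform]; apply div_nonneg (by linarith [hl.2]) ht0.le
        have hc1 : (-t)⁻¹ * l ≤ 1 := by
          rw [hcform, div_le_one ht0]; linarith [hl.1]
        set c := (-t)⁻¹ * l with hcdef
        have hcl : l = c * (-t) := by
          rw [hcdef]; field_simp
        have e1 : c^n * f (-t) = ∏ i ∈ Finset.Icc 1 n, (c * (1 + (-t)*Y i)) := by
          rw [hfdef, Finset.prod_mul_distrib, Finset.prod_const, hcard]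
        rw [e1, hfdef]
        apply Finset.prod_le_prod
        · intro i _
          have hYi := abs_le.1 (hY i)
          apply mul_nonneg hc0
          nlinarith
        · intro i _
          rw [hcl]
          nlinarith [hc1, hc0]
      have hint1 : ∫ l in (-t)..(0:ℝ), ((-t)⁻¹*l)^n * f (-t) ≤ ∫ l in (-t)..(0:ℝ), f l := by
        apply intervalIntegral.integral_mono_on (by linarith)
        · exact (((continuous_const.mul continuous_id).pow n).mul continuous_const).intervalIntegrable _ _
        · exact hfint _ _
        · exact hlow
      have hval : ∫ l in (-t)..(0:ℝ), ((-t)⁻¹*l)^n * f (-t) = t/((n:ℝ)+1) * f (-t) := by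
        rw [intervalIntegral.integral_mul_const]
        have hbase : ∫ l in (-t:ℝ)..0, ((-t)⁻¹ * l)^n = t/((n:ℝ)+1) := by
          have hne : (-t) ≠ 0 := by intro h; nlinarith [ht0]
          simp only [mul_pow]
          rw [intervalIntegral.integral_const_mul, integral_pow, inv_pow]
          field_simp
          rw [pow_succ]
          ring
        rw [hbase]
      calc t/((n:ℝ)+1) * Real.exp ((n:ℝ)*Δ^2/16)
          ≤ t/((n:ℝ)+1) * f (-t) := by
            apply mul_le_mul_of_nonneg_left hkey (by positivity)
      _ = ∫ l in (-t)..(0:ℝ), ((-t)⁻¹*l)^n * f (-t) := hval.symm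
      _ ≤ ∫ l in (-t)..(0:ℝ), f l := hint1
      _ ≤ W := by rw [hsplit]; linarith
    -- B1 : 1/(n+1) ≤ W
    have hB1 : 1/((n:ℝ)+1) ≤ W := by
      have hm : ∀ l ∈ Set.Icc (-1:ℝ) 0, (1+l)^n ≤ f l := by
        intro l hl
        have h1l : (0:ℝ) ≤ 1 + l := by linarith [hl.1]
        have e : (1+l)^n = ∏ _i ∈ Finset.Icc 1 n, (1+l) := by
          rw [Finset.prod_const, hcard]
        rw [e, hfdef]
        apply Finset.prod_le_prod (fun i _ => h1l)
        intro i _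
        have hYi := abs_le.1 (hY i)
        nlinarith [hl.2, hYi.2]
      have hint : ∫ l in (-1:ℝ)..0, (1+l)^n ≤ W := by
        rw [hWf]
        apply intervalIntegral.integral_mono_on (by norm_num)
        · exact ((continuous_const.add continuous_id).pow n).intervalIntegrable _ _
        · exact hfint _ _
        · exact hm
      have hval : ∫ l in (-1:ℝ)..0, (1+l)^n = 1/((n:ℝ)+1) := by
        have h := intervalIntegral.integral_comp_add_left (a := (-1:ℝ)) (b := 0)
          (fun x => x^n) 1
        rw [h]
        norm_num [integral_pow]
      linarith
    have hWpos : (0:ℝ) < W := lt_of_lt_of_le (by positivity) hB1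
    have hn1R : (0:ℝ) < (n:ℝ)+1 := by positivity
    -- reduce the goal
    rw [le_div_iff₀ hnR]
    have hred : (Δ^2/16 - 2*Real.log n/(n:ℝ)) * n = (n:ℝ)*Δ^2/16 - 2*Real.log n := by
      field_simp
    rw [hred]
    by_cases hc : ((n:ℝ)+1)/(n:ℝ)^2 ≤ Δ/4
    · -- B2 route
      have hWlb : Real.log (t/((n:ℝ)+1) * Real.exp ((n:ℝ)*Δ^2/16)) ≤ Real.log W :=
        Real.log_le_log (by positivity) hB2
      rw [Real.log_mul (by positivity) (Real.exp_ne_zero _), Real.log_exp,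
        Real.log_div (ne_of_gt ht0) (ne_of_gt hn1R)] at hWlb
      have h1 : Real.log (((n:ℝ)+1)/(n:ℝ)^2) ≤ Real.log t :=
        Real.log_le_log (by positivity) (hc.trans ht1)
      rw [Real.log_div (ne_of_gt hn1R) (by positivity), Real.log_pow] at h1
      push_cast at h1
      linarith
    · push_neg at hc
      have hWlb : Real.log (1/((n:ℝ)+1)) ≤ Real.log W :=
        Real.log_le_log (by positivity) hB1
      rw [Real.log_div one_ne_zero (ne_of_gt hn1R), Real.log_one] at hWlb
      have hlog : Real.log (((n:ℝ)+1)/(n:ℝ)^2) ≤ ((n:ℝ)+1)/(n:ℝ)^2 - 1 :=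
        Real.log_le_sub_one_of_pos (by positivity)
      rw [Real.log_div (ne_of_gt hn1R) (by positivity), Real.log_pow] at hlog
      push_cast at hlog
      have hnn : (2:ℝ) ≤ (n:ℝ) := by exact_mod_cast hn2
      have hpoly : ((n:ℝ)+1) ≤ (1 - (n:ℝ)*Δ^2/16) * (n:ℝ)^2 := by
        rcases le_or_gt (n:ℝ) 4 with h4 | h4
        · have hΔsq : Δ^2 ≤ 1 := by nlinarith
          nlinarith [mul_nonneg (by linarith : (0:ℝ) ≤ 4 - (n:ℝ)) (sq_nonneg (n:ℝ)),
            mul_nonneg (by linarith : (0:ℝ) ≤ (n:ℝ) - 2) (by linarith : (0:ℝ) ≤ 3*(n:ℝ)+2),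
            mul_nonneg (by positivity : (0:ℝ) ≤ (n:ℝ)^3) (by linarith : (0:ℝ) ≤ 1 - Δ^2)]
        · rw [div_lt_div_iff₀ (by norm_num) (by positivity)] at hc
          have ha1 : Δ * (n:ℝ)^2 ≤ 4*((n:ℝ)+1) := by linarith
          have hsq : (Δ * (n:ℝ)^2)^2 ≤ (4*((n:ℝ)+1))^2 :=
            pow_le_pow_left₀ (by positivity) ha1 2
          nlinarith [hsq, h4, hnR]
      have hpoly' : (n:ℝ)*Δ^2/16 ≤ 1 - ((n:ℝ)+1)/(n:ℝ)^2 := by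
        have h := (div_le_iff₀ (by positivity : (0:ℝ) < (n:ℝ)^2)).2 hpoly
        linarith
      linarith
end

section
/- Let τ be a stopping time with P(τ < ∞) = 1, let θ be a fixed label, and suppose: (a) P(ĵ_n ≠ θ) ≤ C₁·e^{-c·n} for all n ≥ 1 and constants C₁, c > 0; (b) the stopping rule is τ = inf{n ≥ 1 : W_n ≥ 1/α} where W_n ≥ 0 and E[W_n] ≤ C₂·2^n for all n. Then for any integer K ≥ 1, P(ĵ_τ ≠ θ) ≤ Σ_{n≥K} C₁·e^{-c·n} + α·Σ_{n=1}^{K-1} C₂·2^n. In particular, choosing K of order log₂(1/√α), the right-hand side tends to 0 as α → 0, so P(ĵ_τ = θ) → 1 as α → 0. -/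
open MeasureTheory Filter

/-- Identification at stopping. Given (a) exponential misidentification
bounds `P(ĵ n ≠ θ) ≤ C₁ e^{-c n}`, and (b) a nonnegative wealth process with
`E[W n] ≤ C₂ 2ⁿ` whose level-`α` stopping time `τ α` is the first `n ≥ 1` with
`W n ≥ 1/α` (a.s. finite, modeled as `ℕ`-valued), then for every `K ≥ 1`,
`P(ĵ_{τ} ≠ θ) ≤ Σ_{n ≥ K} C₁ e^{-c n} + α·Σ_{n=1}^{K-1} C₂ 2ⁿ`; consequently
`P(ĵ_{τ α} = θ) → 1` as `α → 0⁺`. -/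
theorem stmt_18 {Ω : Type*} [MeasurableSpace Ω] (μ : Measure Ω) [IsProbabilityMeasure μ]
    (L : ℕ) (θ : Fin (L + 1)) (jhat : ℕ → Ω → Fin (L + 1))
    (C₁ c C₂ : ℝ) (hC₁ : 0 < C₁) (hc : 0 < c) (hC₂ : 0 < C₂)
    (hmis : ∀ n : ℕ, 1 ≤ n →
      μ {ω | jhat n ω ≠ θ} ≤ ENNReal.ofReal (C₁ * Real.exp (-c * n)))
    (W : ℕ → Ω → ℝ) (hWnn : ∀ n ω, 0 ≤ W n ω)
    (hWint : ∀ n, Integrable (W n) μ)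
    (hWgrowth : ∀ n : ℕ, ∫ ω, W n ω ∂μ ≤ C₂ * 2 ^ n)
    (τ : ℝ → Ω → ℕ)
    (hτ : ∀ α ∈ Set.Ioo (0 : ℝ) 1, ∀ ω,
      1 ≤ τ α ω ∧ 1 / α ≤ W (τ α ω) ω ∧ ∀ m, 1 ≤ m → m < τ α ω → W m ω < 1 / α) :
    (∀ α ∈ Set.Ioo (0 : ℝ) 1, ∀ K : ℕ, 1 ≤ K →
      μ {ω | jhat (τ α ω) ω ≠ θ}
        ≤ ENNReal.ofReal ((∑' n : ℕ, C₁ * Real.exp (-c * (n + K))) +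
            α * ∑ n ∈ Finset.Ico 1 K, C₂ * 2 ^ n)) ∧
    Tendsto (fun α : ℝ => μ {ω | jhat (τ α ω) ω = θ})
      (nhdsWithin 0 (Set.Ioi 0)) (nhds 1) := by
  have hr0 : (0:ℝ) ≤ Real.exp (-c) := (Real.exp_pos _).le
  have hr1 : Real.exp (-c) < 1 := Real.exp_lt_one_iff.2 (by linarith)
  have hfun : ∀ K n : ℕ, C₁ * Real.exp (-c * ((n:ℝ) + K)) =
      (C₁ * Real.exp (-c * K)) * (Real.exp (-c))^n := by
    intro K n
    have h : -c * ((n:ℝ) + K) = -c * K + (n:ℝ) * (-c) := by ring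
    rw [h, Real.exp_add, Real.exp_nat_mul]; ring
  have hsum : ∀ K : ℕ, Summable (fun n : ℕ => C₁ * Real.exp (-c * ((n:ℝ) + K))) := by
    intro K
    exact ((summable_geometric_of_lt_one hr0 hr1).mul_left
      (C₁ * Real.exp (-c * K))).congr fun n => (hfun K n).symm
  have hnn : ∀ K n : ℕ, 0 ≤ C₁ * Real.exp (-c * ((n:ℝ) + K)) := by
    intro K n; positivity
  -- Markov step
  have hmarkov : ∀ α : ℝ, 0 < α → ∀ m : ℕ,
      μ {ω | 1/α ≤ W m ω} ≤ ENNReal.ofReal (α * (C₂ * 2 ^ m)) := by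
    intro α hα0 m
    have h1 := mul_meas_ge_le_integral_of_nonneg (μ := μ)
      (Filter.Eventually.of_forall (hWnn m)) (hWint m) (1/α)
    have hfin : μ {ω | 1/α ≤ W m ω} ≠ ⊤ := measure_ne_top μ _
    have hα' : (0:ℝ) < 1/α := by positivity
    have ht : (μ {ω | 1/α ≤ W m ω}).toReal ≤ α * (C₂ * 2 ^ m) := by
      have h2 : (μ {ω | 1/α ≤ W m ω}).toReal ≤ α * ∫ ω, W m ω ∂μ := by
        have h3 := mul_le_mul_of_nonneg_left h1 hα0.le
        calc (μ {ω | 1/α ≤ W m ω}).toReal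
            = α * (1/α * (μ {ω | 1/α ≤ W m ω}).toReal) := by field_simp
          _ ≤ α * ∫ ω, W m ω ∂μ := h3
      exact h2.trans (mul_le_mul_of_nonneg_left (hWgrowth m) hα0.le)
    calc μ {ω | 1/α ≤ W m ω} = ENNReal.ofReal ((μ {ω | 1/α ≤ W m ω}).toReal) :=
          (ENNReal.ofReal_toReal hfin).symm
      _ ≤ _ := ENNReal.ofReal_le_ofReal ht
  -- key bound
  have key : ∀ α ∈ Set.Ioo (0:ℝ) 1, ∀ K : ℕ, 1 ≤ K →
      μ {ω | jhat (τ α ω) ω ≠ θ}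
        ≤ ENNReal.ofReal ((∑' n : ℕ, C₁ * Real.exp (-c * (n + K))) +
            α * ∑ n ∈ Finset.Ico 1 K, C₂ * 2 ^ n) := by
    intro α hα K hK
    obtain ⟨hα0, hα1⟩ := hα
    have hsub : {ω | jhat (τ α ω) ω ≠ θ} ⊆
        (⋃ n : ℕ, {ω | jhat (n + K) ω ≠ θ}) ∪
        (⋃ m ∈ Finset.Ico 1 K, {ω | 1/α ≤ W m ω}) := by
      intro ω hω
      by_cases h : K ≤ τ α ω
      · left
        refine Set.mem_iUnion.2 ⟨τ α ω - K, ?_⟩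
        simpa [Nat.sub_add_cancel h] using hω
      · right
        obtain ⟨h1, h2, _⟩ := hτ α ⟨hα0, hα1⟩ ω
        exact Set.mem_biUnion (Finset.mem_Ico.2 ⟨h1, lt_of_not_ge h⟩) h2
    have hB : μ (⋃ n : ℕ, {ω | jhat (n + K) ω ≠ θ})
        ≤ ENNReal.ofReal (∑' n : ℕ, C₁ * Real.exp (-c * (n + K))) := by
      calc μ (⋃ n : ℕ, {ω | jhat (n + K) ω ≠ θ})
          ≤ ∑' n : ℕ, μ {ω | jhat (n + K) ω ≠ θ} := measure_iUnion_le _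
        _ ≤ ∑' n : ℕ, ENNReal.ofReal (C₁ * Real.exp (-c * ((n:ℝ) + K))) := by
            refine ENNReal.tsum_le_tsum fun n => ?_
            refine le_trans (hmis (n + K) (hK.trans (Nat.le_add_left K n))) (le_of_eq ?_)
            push_cast; ring_nf
        _ = ENNReal.ofReal (∑' n : ℕ, C₁ * Real.exp (-c * ((n:ℝ) + K))) :=
            (ENNReal.ofReal_tsum_of_nonneg (hnn K) (hsum K)).symm
    have hC : μ (⋃ m ∈ Finset.Ico 1 K, {ω | 1/α ≤ W m ω})
        ≤ ENNReal.ofReal (α * ∑ n ∈ Finset.Ico 1 K, C₂ * 2 ^ n) := by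
      calc μ (⋃ m ∈ Finset.Ico 1 K, {ω | 1/α ≤ W m ω})
          ≤ ∑ m ∈ Finset.Ico 1 K, μ {ω | 1/α ≤ W m ω} := measure_biUnion_finset_le _ _
        _ ≤ ∑ m ∈ Finset.Ico 1 K, ENNReal.ofReal (α * (C₂ * 2 ^ m)) :=
            Finset.sum_le_sum fun m _ => hmarkov α hα0 m
        _ = ENNReal.ofReal (∑ m ∈ Finset.Ico 1 K, α * (C₂ * 2 ^ m)) :=
            (ENNReal.ofReal_sum_of_nonneg fun m _ => by positivity).symm
        _ = ENNReal.ofReal (α * ∑ n ∈ Finset.Ico 1 K, C₂ * 2 ^ n) := by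
            rw [Finset.mul_sum]
    calc μ {ω | jhat (τ α ω) ω ≠ θ}
        ≤ μ ((⋃ n : ℕ, {ω | jhat (n + K) ω ≠ θ}) ∪
            (⋃ m ∈ Finset.Ico 1 K, {ω | 1/α ≤ W m ω})) := measure_mono hsub
      _ ≤ μ (⋃ n : ℕ, {ω | jhat (n + K) ω ≠ θ}) +
            μ (⋃ m ∈ Finset.Ico 1 K, {ω | 1/α ≤ W m ω}) := measure_union_le _ _
      _ ≤ _ := by
          refine le_trans (add_le_add hB hC) (le_of_eq ?_)
          rw [← ENNReal.ofReal_add]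
          · exact tsum_nonneg fun n => hnn K n
          · positivity
  refine ⟨key, ?_⟩
  -- tsum formula
  have htsum : ∀ K : ℕ, (∑' n : ℕ, C₁ * Real.exp (-c * ((n:ℝ) + K))) =
      (C₁ * (1 - Real.exp (-c))⁻¹) * (Real.exp (-c)) ^ K := by
    intro K
    have : (∑' n : ℕ, C₁ * Real.exp (-c * ((n:ℝ) + K)))
        = ∑' n : ℕ, (C₁ * Real.exp (-c * K)) * (Real.exp (-c))^n :=
      tsum_congr fun n => hfun K n
    rw [this, tsum_mul_left, tsum_geometric_of_lt_one hr0 hr1]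
    rw [show Real.exp (-c * K) = (Real.exp (-c)) ^ K by
      rw [← Real.exp_nat_mul]; ring_nf]
    ring
  have hzero : Tendsto (fun α : ℝ => μ {ω | jhat (τ α ω) ω ≠ θ})
      (nhdsWithin 0 (Set.Ioi 0)) (nhds 0) := by
    rw [ENNReal.tendsto_nhds_zero]
    intro ε hε
    obtain ⟨δ, hδ0, hδε⟩ : ∃ δ : ℝ, 0 < δ ∧ ENNReal.ofReal δ ≤ ε := by
      rcases eq_or_ne ε ⊤ with h | h
      · exact ⟨1, one_pos, by simp [h]⟩
      · exact ⟨ε.toReal, ENNReal.toReal_pos hε.ne' h,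
          le_of_eq (ENNReal.ofReal_toReal h)⟩
    have hTlim : Tendsto (fun K : ℕ => (C₁ * (1 - Real.exp (-c))⁻¹) * (Real.exp (-c)) ^ K)
        atTop (nhds 0) := by
      simpa using (tendsto_pow_atTop_nhds_zero_of_lt_one hr0 hr1).const_mul
        (C₁ * (1 - Real.exp (-c))⁻¹)
    obtain ⟨K, hK1, hKT⟩ : ∃ K : ℕ, 1 ≤ K ∧
        (C₁ * (1 - Real.exp (-c))⁻¹) * (Real.exp (-c)) ^ K ≤ δ/2 := by
      have := (hTlim.eventually (eventually_le_nhds (by positivity : (0:ℝ) < δ/2)))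
      obtain ⟨K, hK⟩ := (this.and (eventually_ge_atTop 1)).exists
      exact ⟨K, hK.2, hK.1⟩
    set S : ℝ := ∑ n ∈ Finset.Ico 1 K, C₂ * 2 ^ n with hS
    have hSnn : 0 ≤ S := Finset.sum_nonneg fun n _ => by positivity
    have hSpos : 0 < S + 1 := by linarith
    have hmem : Set.Ioo (0:ℝ) (min 1 (δ/(2*(S+1)))) ∈ nhdsWithin (0:ℝ) (Set.Ioi 0) := by
      apply Ioo_mem_nhdsGT_of_mem
      constructor
      · rfl
      · exact lt_min one_pos (by positivity)
    filter_upwards [hmem] with α hα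
    have hα01 : α ∈ Set.Ioo (0:ℝ) 1 := ⟨hα.1, hα.2.trans_le (min_le_left _ _)⟩
    refine le_trans (key α hα01 K hK1) (le_trans (ENNReal.ofReal_le_ofReal ?_) hδε)
    rw [htsum K]
    have h2 : α * S ≤ δ/2 := by
      have hle : α ≤ δ/(2*(S+1)) := le_of_lt (hα.2.trans_le (min_le_right _ _))
      calc α * S ≤ α * (S+1) := mul_le_mul_of_nonneg_left (by linarith) hα01.1.le
        _ ≤ (δ/(2*(S+1))) * (S+1) := mul_le_mul_of_nonneg_right hle (by linarith)
        _ = δ/2 := by field_simp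
    linarith
  -- squeeze for the complement
  have hone : Tendsto (fun α : ℝ => (1:ENNReal) - μ {ω | jhat (τ α ω) ω ≠ θ})
      (nhdsWithin 0 (Set.Ioi 0)) (nhds 1) := by
    have := ENNReal.Tendsto.sub (tendsto_const_nhds (x := (1:ENNReal))) hzero
      (Or.inl ENNReal.one_ne_top)
    simpa using this
  refine tendsto_of_tendsto_of_tendsto_of_le_of_le hone tendsto_const_nhds ?_ ?_
  · intro α
    rw [tsub_le_iff_right]
    calc (1:ENNReal) = μ Set.univ := (measure_univ).symm
      _ ≤ μ ({ω | jhat (τ α ω) ω = θ} ∪ {ω | jhat (τ α ω) ω ≠ θ}) := by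
          apply measure_mono; intro ω _
          by_cases h : jhat (τ α ω) ω = θ
          · exact Or.inl h
          · exact Or.inr h
      _ ≤ _ := measure_union_le _ _
  · intro α
    exact prob_le_one
end
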